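/- Assume the GSVD setup with G̃ = U Υ̃ Xᵀ and L̃ = V M̃ Xᵀ, let r̃ ∈ ℝ^m, s_i := (Uᵀ r̃)_{i−q}, and γ_i := ν_i/μ_i for q+1 ≤ i ≤ p. Then for every σ > 0, the minimum over w ∈ ℝ^n of the functional ‖G̃w − r̃‖₂² + σ⁻² ‖L̃w‖₂² equals Σ_{i=q+1}^{p} s_i² / (γ_i² σ² + 1). -/

import Mathlib

open Matrix


private lemma orth_sum {k : ℕ} (W : Matrix (Fin k) (Fin k) ℝ) (hW : Wᵀ * W = 1)
    (x : Fin k → ℝ) : ∑ i, (W *ᵥ x) i ^ 2 = ∑ i, x i ^ 2 := by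
  have h2 : (W *ᵥ x) ᵥ* W = x := by
    rw [← Matrix.mulVec_transpose, Matrix.mulVec_mulVec, hW, Matrix.one_mulVec]
  have h : (W *ᵥ x) ⬝ᵥ (W *ᵥ x) = x ⬝ᵥ x := by
    rw [Matrix.dotProduct_mulVec, h2]
  calc ∑ i, (W *ᵥ x) i ^ 2 = (W *ᵥ x) ⬝ᵥ (W *ᵥ x) := by simp [dotProduct, sq]
    _ = x ⬝ᵥ x := h
    _ = ∑ i, x i ^ 2 := by simp [dotProduct, sq]

private lemma key_lb (a b s σ y : ℝ) (ha : 0 < a) (hb : 0 < b) (hσ : 0 < σ) :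
    s ^ 2 / ((a / b) ^ 2 * σ ^ 2 + 1) ≤ (a * y - s) ^ 2 + (σ ^ 2)⁻¹ * (b * y) ^ 2 := by
  have hD : (0:ℝ) < a ^ 2 * σ ^ 2 + b ^ 2 := by positivity
  have hσ2 : (0:ℝ) < σ ^ 2 := by positivity
  have h1 : s ^ 2 / ((a / b) ^ 2 * σ ^ 2 + 1) = s ^ 2 * b ^ 2 / (a ^ 2 * σ ^ 2 + b ^ 2) := by
    rw [div_eq_div_iff (by positivity) hD.ne']
    field_simp
  have h2 : (a * y - s) ^ 2 + (σ ^ 2)⁻¹ * (b * y) ^ 2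
      = ((a * y - s) ^ 2 * σ ^ 2 + (b * y) ^ 2) / σ ^ 2 := by
    field_simp
  rw [h1, h2, div_le_div_iff₀ hD hσ2]
  nlinarith [sq_nonneg ((a ^ 2 * σ ^ 2 + b ^ 2) * y - a * σ ^ 2 * s)]

private lemma key_eq (a b s σ : ℝ) (ha : 0 < a) (hb : 0 < b) (hσ : 0 < σ) :
    (a * (a * σ ^ 2 * s / (a ^ 2 * σ ^ 2 + b ^ 2)) - s) ^ 2
      + (σ ^ 2)⁻¹ * (b * (a * σ ^ 2 * s / (a ^ 2 * σ ^ 2 + b ^ 2))) ^ 2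
      = s ^ 2 / ((a / b) ^ 2 * σ ^ 2 + 1) := by
  have hD : (0:ℝ) < a ^ 2 * σ ^ 2 + b ^ 2 := by positivity
  have hE : (0:ℝ) < (a / b) ^ 2 * σ ^ 2 + 1 := by positivity
  field_simp
  ring

private lemma reindex_sum (m p q : ℕ) (hqp : q ≤ p) (hpm : p ≤ q + m) (g : ℕ → ℝ) :
    (∑ i : Fin p, if q ≤ (i:ℕ) then g i else 0)
      = ∑ i : Fin m, if q + (i:ℕ) < p then g (q + i) else 0 := by
  rw [Fin.sum_univ_eq_sum_range (fun k => if q ≤ k then g k else 0) p,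
      Fin.sum_univ_eq_sum_range (fun k => if q + k < p then g (q + k) else 0) m]
  have hsub1 : Finset.Ico q p ⊆ Finset.range p := fun x hx => by
    simp only [Finset.mem_Ico] at hx; simp only [Finset.mem_range]; omega
  have h1 : ∑ k ∈ Finset.range p, (if q ≤ k then g k else 0)
      = ∑ k ∈ Finset.Ico q p, g k := by
    rw [← Finset.sum_subset hsub1 (fun x hx hx2 => by
      simp only [Finset.mem_range] at hx
      simp only [Finset.mem_Ico, not_and, not_lt] at hx2
      rw [if_neg (by omega)])]
    exact Finset.sum_congr rfl fun x hx => by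
      simp only [Finset.mem_Ico] at hx; rw [if_pos hx.1]
  have hsub2 : Finset.range (p - q) ⊆ Finset.range m := fun x hx => by
    simp only [Finset.mem_range] at hx ⊢; omega
  have h2 : ∑ k ∈ Finset.range m, (if q + k < p then g (q + k) else 0)
      = ∑ k ∈ Finset.range (p - q), g (q + k) := by
    rw [← Finset.sum_subset hsub2 (fun x hx hx2 => by
      simp only [Finset.mem_range, not_lt] at hx hx2
      rw [if_neg (by omega)])]
    exact Finset.sum_congr rfl fun x hx => by
      simp only [Finset.mem_range] at hx; rw [if_pos (by omega)]
  rw [h1, h2, Finset.sum_Ico_eq_sum_range]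

private def Gv (n : ℕ) (μ : ℕ → ℝ) (y : Fin n → ℝ) (k : ℕ) : ℝ :=
  if h : k < n then (μ k * y ⟨k, h⟩) ^ 2 else 0

/-- In the GSVD setup with G̃ = U Υ̃ Xᵀ and L̃ = V M̃ Xᵀ, s_i := (Uᵀ r̃)_{i−q} and
γ_i := ν_i/μ_i, for every σ > 0 the minimum over w of
‖G̃w − r̃‖₂² + σ⁻² ‖L̃w‖₂² equals Σ_{i=q+1}^{p} s_i² / (γ_i² σ² + 1). -/
theorem gsvd_tikhonov_min_value
    (m n p : ℕ) (hm : 0 < m) (hmn : m < n) (hpn : p ≤ n) (hnmp : n ≤ m + p)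
    (ν μ : ℕ → ℝ)
    (hν0 : ∀ i, n - m ≤ i → i < p → 0 < ν i)
    (hν1 : ∀ i, n - m ≤ i → i < p → ν i < 1)
    (hνmono : ∀ i j, n - m ≤ i → i ≤ j → j < p → ν i ≤ ν j)
    (hμdef : ∀ i, n - m ≤ i → i < p → μ i = Real.sqrt (1 - ν i ^ 2))
    (hνtop : ∀ i, p ≤ i → i < n → ν i = 1)
    (hμlow : ∀ i, i < n - m → μ i = 1)
    (U : Matrix (Fin m) (Fin m) ℝ) (hU : Uᵀ * U = 1)
    (V : Matrix (Fin p) (Fin p) ℝ) (hV : Vᵀ * V = 1)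
    (X : Matrix (Fin n) (Fin n) ℝ) (hX : IsUnit X.det)
    (Υt : Matrix (Fin m) (Fin n) ℝ)
    (hΥt : ∀ (i : Fin m) (j : Fin n), Υt i j = if (j : ℕ) = (n - m) + (i : ℕ) then ν j else 0)
    (Mt : Matrix (Fin p) (Fin n) ℝ)
    (hMt : ∀ (i : Fin p) (j : Fin n), Mt i j = if (j : ℕ) = (i : ℕ) then μ j else 0)
    (Gt : Matrix (Fin m) (Fin n) ℝ) (hGt : Gt = U * Υt * Xᵀ)
    (Lt : Matrix (Fin p) (Fin n) ℝ) (hLt : Lt = V * Mt * Xᵀ)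
    (rt : Fin m → ℝ) :
    ∀ σ : ℝ, 0 < σ →
      IsLeast
        (Set.range fun w : Fin n → ℝ =>
          (∑ i, ((Gt *ᵥ w - rt) i) ^ 2) + (σ ^ 2)⁻¹ * ∑ i, ((Lt *ᵥ w) i) ^ 2)
        (∑ i : Fin m, if (n - m) + (i : ℕ) < p
          then ((Uᵀ *ᵥ rt) i) ^ 2
            / ((ν ((n - m) + (i : ℕ)) / μ ((n - m) + (i : ℕ))) ^ 2 * σ ^ 2 + 1)
          else 0) := by
  intro σ hσ
  have hUU : U * Uᵀ = 1 := mul_eq_one_comm.mp hU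
  have hμpos : ∀ k, n - m ≤ k → k < p → 0 < μ k := by
    intro k h1 h2
    have h3 := hν0 k h1 h2
    have h4 := hν1 k h1 h2
    rw [hμdef k h1 h2]
    exact Real.sqrt_pos.mpr (by nlinarith)
  -- reduction
  have hred : ∀ w : Fin n → ℝ,
      (∑ i, ((Gt *ᵥ w - rt) i) ^ 2) + (σ ^ 2)⁻¹ * ∑ i, ((Lt *ᵥ w) i) ^ 2
        = (∑ i : Fin m, (ν ((n - m) + (i : ℕ))
              * (Xᵀ *ᵥ w) ⟨(n - m) + (i : ℕ), by have := i.isLt; omega⟩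
              - (Uᵀ *ᵥ rt) i) ^ 2)
          + (σ ^ 2)⁻¹ * ∑ i : Fin p,
              (μ (i : ℕ) * (Xᵀ *ᵥ w) ⟨(i : ℕ), by have := i.isLt; omega⟩) ^ 2 := by
    intro w
    have hrt : U *ᵥ (Uᵀ *ᵥ rt) = rt := by
      rw [Matrix.mulVec_mulVec, hUU, Matrix.one_mulVec]
    have e1 : Gt *ᵥ w - rt = U *ᵥ (Υt *ᵥ (Xᵀ *ᵥ w) - Uᵀ *ᵥ rt) := by
      rw [Matrix.mulVec_sub, hrt, Matrix.mulVec_mulVec, Matrix.mulVec_mulVec, hGt]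
    have e2 : Lt *ᵥ w = V *ᵥ (Mt *ᵥ (Xᵀ *ᵥ w)) := by
      rw [Matrix.mulVec_mulVec, Matrix.mulVec_mulVec, hLt]
    rw [e1, e2, orth_sum U hU, orth_sum V hV]
    congr 1
    · apply Finset.sum_congr rfl
      intro i _
      congr 1
      have : (Υt *ᵥ (Xᵀ *ᵥ w)) i
          = ν ((n - m) + (i : ℕ))
              * (Xᵀ *ᵥ w) ⟨(n - m) + (i : ℕ), by have := i.isLt; omega⟩ := by
        show ∑ j, Υt i j * (Xᵀ *ᵥ w) j = _
        simp only [hΥt, ite_mul, zero_mul]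
        rw [Finset.sum_eq_single (⟨(n - m) + (i : ℕ), by have := i.isLt; omega⟩ : Fin n)]
        · simp
        · intro j _ hj
          rw [if_neg (fun hc => hj (Fin.ext hc))]
        · intro h; exact absurd (Finset.mem_univ _) h
      simp only [Pi.sub_apply, this]
    · congr 1
      apply Finset.sum_congr rfl
      intro i _
      congr 1
      show ∑ j, Mt i j * (Xᵀ *ᵥ w) j = _
      simp only [hMt, ite_mul, zero_mul]
      rw [Finset.sum_eq_single (⟨(i : ℕ), by have := i.isLt; omega⟩ : Fin n)]
      · simp
      · intro j _ hj
        rw [if_neg (fun hc => hj (Fin.ext hc))]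
      · intro h; exact absurd (Finset.mem_univ _) h
  constructor
  · -- membership
    have hXt : IsUnit (Xᵀ).det := by rw [Matrix.det_transpose]; exact hX
    set y0 : Fin n → ℝ := fun j =>
      if hq : n - m ≤ (j : ℕ) then
        (if hp : (j : ℕ) < p then
          ν (j : ℕ) * σ ^ 2 * (Uᵀ *ᵥ rt) ⟨(j : ℕ) - (n - m), by have := j.isLt; omega⟩
            / ((ν (j : ℕ)) ^ 2 * σ ^ 2 + (μ (j : ℕ)) ^ 2)
         else (Uᵀ *ᵥ rt) ⟨(j : ℕ) - (n - m), by have := j.isLt; omega⟩)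
      else 0 with hy0
    refine ⟨(Xᵀ)⁻¹ *ᵥ y0, ?_⟩
    have hyw : Xᵀ *ᵥ ((Xᵀ)⁻¹ *ᵥ y0) = y0 := by
      rw [Matrix.mulVec_mulVec, Matrix.mul_nonsing_inv _ hXt, Matrix.one_mulVec]
    simp only []
    rw [hred, hyw]
    have hsum2 : (∑ i : Fin p, (μ (i : ℕ) * y0 ⟨(i : ℕ), by have := i.isLt; omega⟩) ^ 2)
        = ∑ i : Fin p, (if (n - m) ≤ (i : ℕ) then Gv n μ y0 (i : ℕ) else 0) := by
      apply Finset.sum_congr rfl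
      intro i _
      by_cases h : (n - m) ≤ (i : ℕ)
      · rw [if_pos h]
        simp only [Gv]
        rw [dif_pos (by have := i.isLt; omega : (i : ℕ) < n)]
      · rw [if_neg h]
        have h0 : y0 ⟨(i : ℕ), by have := i.isLt; omega⟩ = 0 := by
          simp only [hy0]
          rw [dif_neg h]
        rw [h0, mul_zero]
        norm_num
    rw [hsum2, reindex_sum m p (n - m) (by omega) (by omega), Finset.mul_sum,
      ← Finset.sum_add_distrib]
    apply Finset.sum_congr rfl
    intro i _
    have hin : (n - m) + (i : ℕ) < n := by have := i.isLt; omega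
    by_cases h : (n - m) + (i : ℕ) < p
    · rw [if_pos h, if_pos h]
      have hAy : y0 ⟨(n - m) + (i : ℕ), hin⟩
          = ν ((n - m) + (i : ℕ)) * σ ^ 2 * (Uᵀ *ᵥ rt) i
            / ((ν ((n - m) + (i : ℕ))) ^ 2 * σ ^ 2 + (μ ((n - m) + (i : ℕ))) ^ 2) := by
        simp only [hy0]
        rw [dif_pos (Nat.le_add_right _ _), dif_pos h]
        simp
      have hGv : Gv n μ y0 ((n - m) + (i : ℕ))
          = (μ ((n - m) + (i : ℕ)) * y0 ⟨(n - m) + (i : ℕ), hin⟩) ^ 2 := by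
        simp only [Gv]
        rw [dif_pos hin]
      rw [hGv, hAy]
      exact key_eq _ _ _ _ (hν0 _ (Nat.le_add_right _ _) h) (hμpos _ (Nat.le_add_right _ _) h) hσ
    · rw [if_neg h, if_neg h]
      have hν1' : ν ((n - m) + (i : ℕ)) = 1 := hνtop _ (by omega) hin
      have hy0v : y0 ⟨(n - m) + (i : ℕ), hin⟩ = (Uᵀ *ᵥ rt) i := by
        simp only [hy0]
        rw [dif_pos (Nat.le_add_right _ _), dif_neg h]
        simp
      rw [hy0v, hν1', one_mul, sub_self, mul_zero]
      norm_num
  · -- lower bound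
    rintro v ⟨w, rfl⟩
    simp only []
    rw [hred w]
    set y := Xᵀ *ᵥ w with hy
    calc (∑ i : Fin m, if (n - m) + (i : ℕ) < p
          then ((Uᵀ *ᵥ rt) i) ^ 2
            / ((ν ((n - m) + (i : ℕ)) / μ ((n - m) + (i : ℕ))) ^ 2 * σ ^ 2 + 1)
          else 0)
        ≤ ∑ i : Fin m, ((ν ((n - m) + (i : ℕ))
              * y ⟨(n - m) + (i : ℕ), by have := i.isLt; omega⟩ - (Uᵀ *ᵥ rt) i) ^ 2
            + (σ ^ 2)⁻¹ * (if (n - m) + (i : ℕ) < p then Gv n μ y ((n - m) + (i : ℕ)) else 0)) := by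
          apply Finset.sum_le_sum
          intro i _
          by_cases hip : (n - m) + (i : ℕ) < p
          · rw [if_pos hip, if_pos hip]
            have hin : (n - m) + (i : ℕ) < n := by have := i.isLt; omega
            simp only [Gv]
            rw [dif_pos hin]
            exact key_lb _ _ _ _ _ (hν0 _ (Nat.le_add_right _ _) hip)
              (hμpos _ (Nat.le_add_right _ _) hip) hσ
          · rw [if_neg hip, if_neg hip, mul_zero, add_zero]
            positivity
      _ = (∑ i : Fin m, (ν ((n - m) + (i : ℕ))
              * y ⟨(n - m) + (i : ℕ), by have := i.isLt; omega⟩ - (Uᵀ *ᵥ rt) i) ^ 2)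
            + (σ ^ 2)⁻¹ * ∑ i : Fin m,
              (if (n - m) + (i : ℕ) < p then Gv n μ y ((n - m) + (i : ℕ)) else 0) := by
          rw [Finset.sum_add_distrib, Finset.mul_sum]
      _ = (∑ i : Fin m, (ν ((n - m) + (i : ℕ))
              * y ⟨(n - m) + (i : ℕ), by have := i.isLt; omega⟩ - (Uᵀ *ᵥ rt) i) ^ 2)
            + (σ ^ 2)⁻¹ * ∑ i : Fin p,
              (if (n - m) ≤ (i : ℕ) then Gv n μ y (i : ℕ) else 0) := by
          rw [reindex_sum m p (n - m) (by omega) (by omega)]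
      _ ≤ (∑ i : Fin m, (ν ((n - m) + (i : ℕ))
              * y ⟨(n - m) + (i : ℕ), by have := i.isLt; omega⟩ - (Uᵀ *ᵥ rt) i) ^ 2)
            + (σ ^ 2)⁻¹ * ∑ i : Fin p,
              (μ (i : ℕ) * y ⟨(i : ℕ), by have := i.isLt; omega⟩) ^ 2 := by
          apply add_le_add (le_refl _)
          apply mul_le_mul_of_nonneg_left _ (by positivity)
          apply Finset.sum_le_sum
          intro i _
          by_cases h : (n - m) ≤ (i : ℕ)
          · rw [if_pos h]
            simp only [Gv]
            rw [dif_pos (by have := i.isLt; omega : (i : ℕ) < n)]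
          · rw [if_neg h]
            positivity
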